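/- Let A be a unital C*-algebra, B a unital C*-subalgebra, and E : A → B a unital positive linear map. If a ∈ A has Im a strictly positive, then: a is invertible, Im(E[a^{-1}]) is strictly negative (i.e. −Im E[a^{-1}] is strictly positive, so in particular E[a^{-1}] is invertible), (Im a)^{-1} exists with E[(Im a)^{-1}] strictly positive, and Im( E[a^{-1}]^{-1} ) ≥ E[(Im a)^{-1}]^{-1}. -/

import Mathlib

noncomputable section

set_option linter.unusedSectionVars false
set_option linter.unusedVariables false
set_option maxHeartbeats 1000000

/-- The imaginary part `Im a = (a - a*)/(2i)` of an element of a complex star algebra. -/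
def aIm {A : Type*} [NonUnitalRing A] [StarRing A] [Module ℂ A] (a : A) : A :=
  ((2 * Complex.I)⁻¹ : ℂ) • (a - star a)

/-- `k > 0`: `k` is selfadjoint, nonnegative and invertible. -/
def StrictlyPos {A : Type*} [Ring A] [StarRing A] [PartialOrder A] (k : A) : Prop :=
  IsSelfAdjoint k ∧ 0 ≤ k ∧ IsUnit k

section AllHelpers
variable {A : Type*} [CStarAlgebra A] [PartialOrder A] [StarOrderedRing A]

lemma self_eq_re_add_im (a : A) :
    a = ((2 : ℂ)⁻¹ • (a + star a)) + Complex.I • aIm a := by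
  unfold aIm
  rw [smul_smul]
  have h1 : Complex.I * (2 * Complex.I)⁻¹ = (2 : ℂ)⁻¹ := by
    field_simp [Complex.I_ne_zero]
  rw [h1, ← smul_add]
  have h2 : (a + star a) + (a - star a) = (2 : ℂ) • a := by
    rw [two_smul]; abel
  rw [h2, smul_smul]
  norm_num

lemma aIm_conj (c a : A) (hc : IsSelfAdjoint c) : aIm (c * a * c) = c * aIm a * c := by
  unfold aIm
  rw [star_mul, star_mul, hc.star_eq, mul_assoc, ← mul_sub, ← sub_mul, mul_smul_comm,
    smul_mul_assoc, mul_assoc]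

lemma strictlyPos_of_algebraMap_le {k : A} (hsa : IsSelfAdjoint k) {ε : ℝ} (hε : 0 < ε)
    (hle : algebraMap ℝ A ε ≤ k) : StrictlyPos k := by
  have h0 : (0 : A) ≤ algebraMap ℝ A ε := by
    rw [Algebra.algebraMap_eq_smul_one]
    exact smul_nonneg hε.le zero_le_one
  exact ⟨hsa, h0.trans hle, CStarAlgebra.isUnit_of_le _ hle ⟨h0, hε.ne'.isUnit.map (algebraMap ℝ A)⟩⟩

lemma mul_conj_sa (x : A) (hx : IsSelfAdjoint x) :
    (x + Complex.I • 1) * (x - Complex.I • 1) = x * x + 1 ∧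
    (x - Complex.I • 1) * (x + Complex.I • 1) = x * x + 1 := by
  constructor <;>
  · simp only [mul_sub, sub_mul, add_mul, mul_add, smul_mul_assoc, mul_smul_comm, one_mul, mul_one]
    match_scalars <;> simp [Complex.I_sq] <;> ring

lemma isUnit_sa_add_I (x : A) (hx : IsSelfAdjoint x) : IsUnit (x + Complex.I • 1) := by
  obtain ⟨h1, h2⟩ := mul_conj_sa x hx
  have hpos : (1 : A) ≤ x * x + 1 := by
    nth_rewrite 1 [← zero_add (1 : A)]
    refine add_le_add_left ?_ 1
    simpa using star_mul_self_nonneg x |>.trans_eq (by rw [hx.star_eq])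
  have hunit : IsUnit (x * x + 1) := CStarAlgebra.isUnit_of_le 1 hpos ⟨zero_le_one, isUnit_one⟩
  obtain ⟨u, hu⟩ := hunit
  set g := x + Complex.I • 1
  set g' := x - Complex.I • 1
  have hc : g * (g' * ↑u⁻¹) = 1 := by rw [← mul_assoc, h1, ← hu, Units.mul_inv]
  have hd : (↑u⁻¹ * g') * g = 1 := by rw [mul_assoc, h2, ← hu, Units.inv_mul]
  have hdc : (↑u⁻¹ * g' : A) = g' * ↑u⁻¹ := by
    calc (↑u⁻¹ * g' : A) = (↑u⁻¹ * g') * (g * (g' * ↑u⁻¹)) := by rw [hc, mul_one]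
    _ = ((↑u⁻¹ * g') * g) * (g' * ↑u⁻¹) := by simp only [mul_assoc]
    _ = g' * ↑u⁻¹ := by rw [hd, one_mul]
  exact ⟨⟨g, g' * ↑u⁻¹, hc, by rw [← hdc]; exact hd⟩, rfl⟩

lemma isUnit_of_aIm_eq_one {g : A} (hg : aIm g = 1) : IsUnit g := by
  have hxsa : IsSelfAdjoint ((2 : ℂ)⁻¹ • (g + star g)) := by
    refine IsSelfAdjoint.smul ?_ (IsSelfAdjoint.add_star_self g)
    show star ((2:ℂ)⁻¹) = (2:ℂ)⁻¹
    rw [RCLike.star_def, map_inv₀, map_ofNat]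
  have hgx : g = (2 : ℂ)⁻¹ • (g + star g) + Complex.I • (1 : A) := by
    conv_lhs => rw [self_eq_re_add_im g, hg]
  exact hgx ▸ isUnit_sa_add_I _ hxsa

lemma isUnit_of_strictlyPos_aIm {g : A} (h : StrictlyPos (aIm g)) : IsUnit g := by
  set k := aIm g with hk
  have hκκ : CFC.sqrt k * CFC.sqrt k = k := CFC.sqrt_mul_sqrt_self k h.2.1
  have hκsa : IsSelfAdjoint (CFC.sqrt k) := IsSelfAdjoint.of_nonneg (CFC.sqrt_nonneg _)
  have hκu : IsUnit (CFC.sqrt k) :=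
    ((Commute.refl _).isUnit_mul_iff.mp (by rw [hκκ]; exact h.2.2)).1
  set κu := hκu.unit with hκudef
  have hκuval : (↑κu : A) = CFC.sqrt k := rfl
  set j : A := ↑κu⁻¹ with hj
  have hjκ : j * CFC.sqrt k = 1 := κu.inv_mul
  have hκj : CFC.sqrt k * j = 1 := κu.mul_inv
  have hjsa : IsSelfAdjoint j := by
    have h1 : star j * CFC.sqrt k = 1 := by
      have := congrArg star hκj
      rwa [star_mul, star_one, hκsa.star_eq] at this
    calc star j = star j * (CFC.sqrt k * j) := by rw [hκj, mul_one]
    _ = (star j * CFC.sqrt k) * j := by rw [mul_assoc]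
    _ = j := by rw [h1, one_mul]
  have hg' : aIm (j * g * j) = 1 := by
    have hassoc : j * (CFC.sqrt k * CFC.sqrt k) * j = (j * CFC.sqrt k) * (CFC.sqrt k * j) := by
      simp only [mul_assoc]
    rw [aIm_conj _ _ hjsa, ← hk, ← hκκ, hassoc, hjκ, hκj, one_mul]
  have hunit' : IsUnit (j * g * j) := isUnit_of_aIm_eq_one hg'
  have : g = CFC.sqrt k * (j * g * j) * CFC.sqrt k := by
    rw [← mul_assoc, ← mul_assoc, hκj, one_mul, mul_assoc, hjκ, mul_one]
  rw [this]
  exact (hκu.mul hunit').mul hκu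

lemma aIm_units_inv (u : Aˣ) : aIm ((↑u⁻¹ : A)) = -((↑u⁻¹ : A) * aIm (↑u : A) * star (↑u⁻¹ : A)) := by
  unfold aIm
  have h1 : star ((u : A)) * star ((↑u⁻¹ : A)) = 1 := by
    rw [← star_mul]; simp
  have h2 : (↑u⁻¹ : A) * ((u : A) - star (u : A)) * star (↑u⁻¹ : A)
      = star (↑u⁻¹ : A) - (↑u⁻¹ : A) := by
    rw [mul_sub, sub_mul, Units.inv_mul, one_mul, mul_assoc, h1, mul_one]
  rw [mul_smul_comm, smul_mul_assoc, h2, ← smul_neg, neg_sub]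


lemma StrictlyPos.exists_algebraMap_le [Nontrivial A] {k : A} (hk : StrictlyPos k) :
    ∃ ε > 0, algebraMap ℝ A ε ≤ k := by
  refine (CFC.exists_pos_algebraMap_le_iff hk.1).mpr fun x hx => ?_
  refine lt_of_le_of_ne (spectrum_nonneg_of_nonneg hk.2.1 hx) ?_
  intro h0
  exact (spectrum.zero_mem_iff ℝ).not.mpr (by simpa using hk.2.2) (h0 ▸ hx)


lemma posmap_mono (L : A →ₗ[ℂ] A) (hLpos : ∀ x : A, 0 ≤ x → 0 ≤ L x)
    {x y : A} (hxy : x ≤ y) : L x ≤ L y := by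
  have := hLpos _ (sub_nonneg.mpr hxy)
  rw [map_sub] at this
  exact sub_nonneg.mp this

lemma posmap_smul_real (L : A →ₗ[ℂ] A) (c : ℝ) (x : A) : L (c • x) = c • L x :=
  L.map_smul_of_tower c x

lemma nonneg_add_norm_smul_one {x : A} (hx : IsSelfAdjoint x) : (0 : A) ≤ x + ‖x‖ • 1 := by
  have h := hx.neg_algebraMap_norm_le_self
  rw [Algebra.algebraMap_eq_smul_one] at h
  exact neg_le_iff_add_nonneg.mp h

lemma posmap_sa (L : A →ₗ[ℂ] A) (hL1 : L 1 = 1) (hLpos : ∀ x : A, 0 ≤ x → 0 ≤ L x)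
    {x : A} (hx : IsSelfAdjoint x) : IsSelfAdjoint (L x) := by
  have h2 : L x = L (x + ‖x‖ • (1 : A)) - ‖x‖ • 1 := by
    rw [map_add, posmap_smul_real, hL1]
    abel
  rw [h2]
  exact (IsSelfAdjoint.of_nonneg (hLpos _ (nonneg_add_norm_smul_one hx))).sub
    (IsSelfAdjoint.of_nonneg (smul_nonneg (norm_nonneg x) zero_le_one))

lemma posmap_norm_le [Nontrivial A] (L : A →ₗ[ℂ] A) (hL1 : L 1 = 1)
    (hLpos : ∀ x : A, 0 ≤ x → 0 ≤ L x)
    {x : A} (hx : IsSelfAdjoint x) : ‖L x‖ ≤ 3 * ‖x‖ := by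
  have hub : x ≤ ‖x‖ • 1 := by
    have := hx.le_algebraMap_norm_self
    rwa [Algebra.algebraMap_eq_smul_one] at this
  have h1 : (0:A) ≤ L x + ‖x‖ • 1 := by
    have := hLpos _ (nonneg_add_norm_smul_one hx)
    rwa [map_add, posmap_smul_real, hL1] at this
  have h2 : L x + ‖x‖ • 1 ≤ (2 * ‖x‖) • 1 := by
    have hm := posmap_mono L hLpos hub
    rw [posmap_smul_real, hL1] at hm
    calc L x + ‖x‖ • 1 ≤ ‖x‖ • 1 + ‖x‖ • 1 := add_le_add_left hm _
    _ = (2 * ‖x‖) • 1 := by rw [two_mul, add_smul]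
  have hn : ‖L x + ‖x‖ • (1:A)‖ ≤ 2 * ‖x‖ := by
    rw [CStarAlgebra.norm_le_iff_le_algebraMap _ (by positivity) h1,
      Algebra.algebraMap_eq_smul_one]
    exact h2
  calc ‖L x‖ = ‖(L x + ‖x‖ • (1:A)) - ‖x‖ • 1‖ := by rw [add_sub_cancel_right]
  _ ≤ ‖L x + ‖x‖ • (1:A)‖ + ‖‖x‖ • (1:A)‖ := norm_sub_le _ _
  _ ≤ 2 * ‖x‖ + ‖x‖ := by
      refine add_le_add hn ?_
      rw [norm_smul, norm_one, mul_one]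
      exact (norm_norm x).le
  _ = 3 * ‖x‖ := by ring

lemma posmap_neg_smul_one_le (L : A →ₗ[ℂ] A) (hL1 : L 1 = 1)
    (hLpos : ∀ x : A, 0 ≤ x → 0 ≤ L x) {x : A} (hx : IsSelfAdjoint x)
    {c : ℝ} (hc : ‖x‖ ≤ c) : -(c • (1:A)) ≤ L x := by
  have h1 : -(c • (1:A)) ≤ -(‖x‖ • (1:A)) := by
    rw [neg_le_neg_iff, ← sub_nonneg, ← sub_smul]
    exact smul_nonneg (by linarith) zero_le_one
  refine h1.trans ?_
  have h2 : (0:A) ≤ L x + ‖x‖ • 1 := by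
    have := hLpos _ (nonneg_add_norm_smul_one hx)
    rwa [map_add, posmap_smul_real, hL1] at this
  exact neg_le_iff_add_nonneg.mpr h2

lemma le_of_forall_nonneg_add (z : A) (C : ℝ)
    (h : ∀ n : ℕ, 1 ≤ n → (0:A) ≤ z + (C/(n:ℝ)) • 1) : 0 ≤ z := by
  have htend : Filter.Tendsto (fun n : ℕ => z + (C/(n:ℝ)) • (1:A)) Filter.atTop (nhds z) := by
    have h0 : Filter.Tendsto (fun n : ℕ => C/(n:ℝ)) Filter.atTop (nhds 0) :=
      tendsto_const_div_atTop_nhds_zero_nat C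
    have := (h0.smul_const (1:A)).const_add z
    simpa using this
  exact CStarAlgebra.isClosed_nonneg.mem_of_tendsto htend
    (Filter.eventually_atTop.mpr ⟨1, fun n hn => h n hn⟩)


/-- hat function -/
def hatf (w : ℝ) (j : ℤ) (t : ℝ) : ℝ := max 0 (1 - |t/w - (j:ℝ)|)

lemma hatf_nonneg (w : ℝ) (j : ℤ) (t : ℝ) : 0 ≤ hatf w j t := le_max_left _ _

lemma hatf_cont (w : ℝ) (j : ℤ) : Continuous (hatf w j) := by
  unfold hatf; fun_prop

lemma hatf_le_one (w : ℝ) (j : ℤ) (t : ℝ) : hatf w j t ≤ 1 := by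
  unfold hatf
  rcases abs_nonneg (t/w - (j:ℝ)) with h
  exact max_le (by norm_num) (by linarith)

lemma hatf_close {w : ℝ} (hw : 0 < w) {j : ℤ} {t : ℝ} (h : hatf w j t ≠ 0) :
    |t - j*w| ≤ w := by
  have h1 : 1 - |t/w - (j:ℝ)| > 0 := by
    by_contra hc
    push_neg at hc
    exact h (max_eq_left (by linarith))
  have ht : t = (t/w) * w := by field_simp
  have : t - j*w = (t/w - j) * w := by rw [sub_mul]; rw [← ht]
  rw [this, abs_mul, abs_of_pos hw]
  nlinarith [abs_nonneg (t/w - (j:ℝ))]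

lemma hat_sum_eq_one {w : ℝ} (hw : 0 < w) {n : ℕ} (hn : 1 ≤ n) {t : ℝ}
    (ht : |t| ≤ (n:ℝ)*w) : ∑ j ∈ Finset.Icc (-(n:ℤ)) (n:ℤ), hatf w j t = 1 := by
  set u := t/w with hu
  have hun : |u| ≤ (n:ℝ) := by
    rw [hu, abs_div, abs_of_pos hw, div_le_iff₀ hw]
    exact ht
  have hul : -(n:ℝ) ≤ u := neg_le_of_abs_le hun
  have huu : u ≤ (n:ℝ) := le_of_abs_le hun
  set m : ℤ := min ((n:ℤ)-1) ⌊u⌋ with hm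
  have hm1 : (-(n:ℤ)) ≤ m := by
    refine le_min (by omega) ?_
    rw [Int.le_floor]
    push_cast
    exact hul
  have hm2 : m ≤ (n:ℤ)-1 := min_le_left _ _
  have hmu : (m:ℝ) ≤ u := by
    refine le_trans ?_ (Int.floor_le u)
    exact_mod_cast min_le_right _ _
  have hum : u ≤ (m:ℝ)+1 := by
    rcases min_cases ((n:ℤ)-1) ⌊u⌋ with ⟨heq, hle⟩ | ⟨heq, hlt⟩
    · -- m = n-1, so ⌊u⌋ ≥ n-1 : u ≤ n = m+1
      have : ((m:ℝ)) = (n:ℝ)-1 := by rw [hm, heq]; push_cast; ring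
      rw [this]; linarith
    · have : (m:ℤ) = ⌊u⌋ := by rw [hm, heq]
      rw [this]
      exact (Int.lt_floor_add_one u).le
  have hsub : ({m, m+1} : Finset ℤ) ⊆ Finset.Icc (-(n:ℤ)) (n:ℤ) := by
    intro j hj
    simp only [Finset.mem_insert, Finset.mem_singleton] at hj
    rcases hj with rfl | rfl <;> simp only [Finset.mem_Icc] <;> omega
  have hzero : ∀ j ∈ Finset.Icc (-(n:ℤ)) (n:ℤ), j ∉ ({m, m+1} : Finset ℤ) → hatf w j t = 0 := by
    intro j _ hj
    simp only [Finset.mem_insert, Finset.mem_singleton, not_or] at hj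
    have hfar : 1 ≤ |u - (j:ℝ)| := by
      rcases lt_or_gt_of_ne (fun hc : j = m => hj.1 hc) with hlt | hgt
      · have : (j:ℝ) ≤ (m:ℝ) - 1 := by exact_mod_cast (by omega : j ≤ m - 1)
        rw [abs_of_nonneg (by linarith)]
        linarith
      · have : (m:ℝ) + 2 ≤ (j:ℝ) := by exact_mod_cast (by omega : m + 2 ≤ j)
        rw [abs_of_nonpos (by linarith)]
        linarith
    unfold hatf
    rw [← hu]
    exact max_eq_left (by linarith [hfar])
  rw [← Finset.sum_subset hsub hzero, Finset.sum_pair (by omega : m ≠ m + 1)]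
  unfold hatf
  rw [← hu]
  have e1 : |u - (m:ℝ)| = u - m := abs_of_nonneg (by linarith)
  have e2 : |u - ((m+1:ℤ):ℝ)| = (m:ℝ) + 1 - u := by
    push_cast
    rw [abs_of_nonpos (by linarith)]
    ring
  rw [e1, e2, max_eq_right (by linarith), max_eq_right (by linarith)]
  ring

lemma hat_approx {w : ℝ} (hw : 0 < w) {n : ℕ} (hn : 1 ≤ n) {t : ℝ}
    (ht : |t| ≤ (n:ℝ)*w) (g : ℝ → ℝ) {C : ℝ} (hC : 0 ≤ C)
    (hg : ∀ j : ℤ, j ∈ Finset.Icc (-(n:ℤ)) (n:ℤ) → |t - j*w| ≤ w → |g t - g (j*w)| ≤ C) :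
    |g t - ∑ j ∈ Finset.Icc (-(n:ℤ)) (n:ℤ), g ((j:ℝ)*w) * hatf w j t| ≤ C := by
  have hsum := hat_sum_eq_one hw hn ht
  have hrw : g t - ∑ j ∈ Finset.Icc (-(n:ℤ)) (n:ℤ), g ((j:ℝ)*w) * hatf w j t
      = ∑ j ∈ Finset.Icc (-(n:ℤ)) (n:ℤ), (g t - g ((j:ℝ)*w)) * hatf w j t := by
    symm
    simp only [sub_mul]
    rw [Finset.sum_sub_distrib, ← Finset.mul_sum, hsum, mul_one]
  rw [hrw]
  refine (Finset.abs_sum_le_sum_abs _ _).trans ?_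
  have hterm : ∀ j ∈ Finset.Icc (-(n:ℤ)) (n:ℤ),
      |(g t - g ((j:ℝ)*w)) * hatf w j t| ≤ C * hatf w j t := by
    intro j hj
    rw [abs_mul, abs_of_nonneg (hatf_nonneg w j t)]
    by_cases hf : hatf w j t = 0
    · rw [hf]; simp
    · exact mul_le_mul_of_nonneg_right (hg j hj (hatf_close hw hf)) (hatf_nonneg w j t)
  refine (Finset.sum_le_sum hterm).trans ?_
  rw [← Finset.mul_sum, hsum, mul_one]


lemma isSelfAdjoint_finsum {ι : Type*} (S : Finset ι) (f : ι → A)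
    (hf : ∀ j ∈ S, IsSelfAdjoint (f j)) : IsSelfAdjoint (∑ j ∈ S, f j) := by
  rw [IsSelfAdjoint, star_sum]
  exact Finset.sum_congr rfl fun j hj => (hf j hj).star_eq

lemma kadison_finset {ι : Type*} (S : Finset ι) (lam : ι → ℝ) (q : ι → A)
    (hq : ∀ j ∈ S, 0 ≤ q j) (hsum : ∑ j ∈ S, q j = 1) :
    (∑ j ∈ S, lam j • q j) * (∑ j ∈ S, lam j • q j) ≤ ∑ j ∈ S, (lam j * lam j) • q j := by
  set s := ∑ j ∈ S, lam j • q j with hs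
  have hs_sa : IsSelfAdjoint s := by
    refine isSelfAdjoint_finsum S _ fun j hj => ?_
    exact IsSelfAdjoint.smul (star_trivial _) (IsSelfAdjoint.of_nonneg (hq j hj))
  have expand : ∀ j ∈ S, (lam j • (1:A) - s) * q j * (lam j • (1:A) - s)
      = (lam j * lam j) • q j - s * (lam j • q j) - (lam j • q j) * s + s * q j * s := by
    intro j _
    simp only [sub_mul, mul_sub, smul_mul_assoc, mul_smul_comm, one_mul, mul_one, smul_smul]
    module
  have hpos : (0:A) ≤ ∑ j ∈ S, (lam j • (1:A) - s) * q j * (lam j • (1:A) - s) := by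
    refine Finset.sum_nonneg fun j hj => ?_
    have hc : IsSelfAdjoint (lam j • (1:A) - s) := by
      refine IsSelfAdjoint.sub ?_ hs_sa
      exact IsSelfAdjoint.smul (star_trivial _) (IsSelfAdjoint.of_nonneg zero_le_one)
    exact hc.conjugate_nonneg (hq j hj)
  have hiden : ∑ j ∈ S, (lam j • (1:A) - s) * q j * (lam j • (1:A) - s)
      = (∑ j ∈ S, (lam j * lam j) • q j) - s * s := by
    rw [Finset.sum_congr rfl expand]
    rw [Finset.sum_add_distrib, Finset.sum_sub_distrib, Finset.sum_sub_distrib]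
    have e1 : ∑ j ∈ S, s * (lam j • q j) = s * s := by rw [← Finset.mul_sum, ← hs]
    have e2 : ∑ j ∈ S, (lam j • q j) * s = s * s := by rw [← Finset.sum_mul, ← hs]
    have e3 : ∑ j ∈ S, s * q j * s = s * s := by
      have : ∀ j ∈ S, s * q j * s = s * (q j * s) := fun j _ => mul_assoc _ _ _
      rw [Finset.sum_congr rfl this, ← Finset.mul_sum, ← Finset.sum_mul, hsum, one_mul]
    rw [e1, e2, e3]
    abel
  rw [hiden] at hpos
  exact sub_nonneg.mp hpos

lemma kadison [Nontrivial A] (L : A →ₗ[ℂ] A) (hL1 : L 1 = 1)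
    (hLpos : ∀ x : A, 0 ≤ x → 0 ≤ L x) {h : A} (hh : IsSelfAdjoint h) :
    L h * L h ≤ L (h * h) := by
  set r : ℝ := ‖h‖ + 1 with hrdef
  have hr : 0 < r := by positivity
  have hhr : ‖h‖ ≤ r := by simp [hrdef]
  have hhsa : IsSelfAdjoint (h * h) := by
    rw [IsSelfAdjoint, star_mul, hh.star_eq]
  have main : ∀ n : ℕ, 1 ≤ n → L h * L h ≤ L (h * h) + (54*(r*r)/(n:ℝ)) • 1 := by
    intro n hn
    have hn0 : (0:ℝ) < n := by exact_mod_cast hn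
    set w : ℝ := r / (n:ℝ) with hwdef
    have hw : 0 < w := by positivity
    have hnw : (n:ℝ) * w = r := by rw [hwdef]; field_simp
    have hwr : w ≤ r := by
      rw [hwdef]
      exact div_le_self hr.le (by exact_mod_cast hn)
    have hCrw : 54*(r*r)/(n:ℝ) = 54*(r*w) := by rw [hwdef]; ring
    set S : Finset ℤ := Finset.Icc (-(n:ℤ)) (n:ℤ) with hS
    have hspec : ∀ t ∈ spectrum ℝ h, |t| ≤ (n:ℝ) * w := by
      intro t ht
      rw [hnw]
      calc |t| = ‖t‖ := (Real.norm_eq_abs t).symm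
      _ ≤ ‖h‖ := spectrum.norm_le_norm_of_mem ht
      _ ≤ r := hhr
    set hj : ℤ → A := fun j => cfc (hatf w j) h with hhj
    set q : ℤ → A := fun j => L (hj j) with hq
    have hcont : ∀ j : ℤ, ContinuousOn (hatf w j) (spectrum ℝ h) :=
      fun j => (hatf_cont w j).continuousOn
    have hj0 : ∀ j : ℤ, 0 ≤ hj j := fun j =>
      cfc_nonneg (fun t _ => hatf_nonneg w j t)
    have hjsa : ∀ j : ℤ, IsSelfAdjoint (hj j) := fun j => IsSelfAdjoint.of_nonneg (hj0 j)
    have hq0 : ∀ j ∈ S, (0:A) ≤ q j := fun j _ => hLpos _ (hj0 j)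
    -- sum of hj equals 1
    have hjsum : ∑ j ∈ S, hj j = 1 := by
      rw [hhj]
      rw [← cfc_sum (fun j => hatf w j) h S (fun j _ => hcont j)]
      have : cfc (∑ j ∈ S, hatf w j) h = cfc (fun _ : ℝ => (1:ℝ)) h := by
        refine cfc_congr fun t ht => ?_
        rw [Finset.sum_apply]
        exact hat_sum_eq_one hw hn (hspec t ht)
      rw [this, cfc_const 1 h, map_one]
    have hqsum : ∑ j ∈ S, q j = 1 := by
      rw [hq, ← map_sum, hjsum, hL1]
    -- representations as cfc
    have hrepr1 : ∑ j ∈ S, ((j:ℝ)*w) • hj j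
        = cfc (fun t => ∑ j ∈ S, (((j:ℝ)*w) * hatf w j t)) h := by
      have hfun : (fun t => ∑ j ∈ S, (((j:ℝ)*w) * hatf w j t))
          = ∑ j ∈ S, (fun t => ((j:ℝ)*w) * hatf w j t) := by
        funext t; rw [Finset.sum_apply]
      rw [hfun, cfc_sum (fun j : ℤ => fun t : ℝ => ((j:ℝ)*w) * hatf w j t) h S (fun j _ => ((continuous_const.mul (hatf_cont w j)).continuousOn))]
      exact Finset.sum_congr rfl fun j _ => (cfc_const_mul ((j:ℝ)*w) (hatf w j) h (hcont j)).symm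
    have hrepr2 : ∑ j ∈ S, (((j:ℝ)*w) * ((j:ℝ)*w)) • hj j
        = cfc (fun t => ∑ j ∈ S, ((((j:ℝ)*w) * ((j:ℝ)*w)) * hatf w j t)) h := by
      have hfun : (fun t => ∑ j ∈ S, ((((j:ℝ)*w) * ((j:ℝ)*w)) * hatf w j t))
          = ∑ j ∈ S, (fun t => (((j:ℝ)*w) * ((j:ℝ)*w)) * hatf w j t) := by
        funext t; rw [Finset.sum_apply]
      rw [hfun, cfc_sum (fun j : ℤ => fun t : ℝ => (((j:ℝ)*w) * ((j:ℝ)*w)) * hatf w j t) h S (fun j _ => ((continuous_const.mul (hatf_cont w j)).continuousOn))]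
      exact Finset.sum_congr rfl fun j _ =>
        (cfc_const_mul (((j:ℝ)*w) * ((j:ℝ)*w)) (hatf w j) h (hcont j)).symm
    -- norm bounds
    set d1 : A := h - ∑ j ∈ S, ((j:ℝ)*w) • hj j with hd1def
    set d2 : A := h * h - ∑ j ∈ S, (((j:ℝ)*w) * ((j:ℝ)*w)) • hj j with hd2def
    have hd1sa : IsSelfAdjoint d1 := by
      refine hh.sub (isSelfAdjoint_finsum S _ fun j hj' => ?_)
      exact IsSelfAdjoint.smul (star_trivial _) (hjsa j)
    have hd2sa : IsSelfAdjoint d2 := by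
      refine hhsa.sub (isSelfAdjoint_finsum S _ fun j hj' => ?_)
      exact IsSelfAdjoint.smul (star_trivial _) (hjsa j)
    have hd1norm : ‖d1‖ ≤ w := by
      rw [hd1def, hrepr1]
      have : h - cfc (fun t => ∑ j ∈ S, (((j:ℝ)*w) * hatf w j t)) h
          = cfc (fun t => t - ∑ j ∈ S, (((j:ℝ)*w) * hatf w j t)) h := by
        rw [cfc_sub (fun t : ℝ => t) (fun t => ∑ j ∈ S, (((j:ℝ)*w) * hatf w j t)) h
          continuous_id.continuousOn
          ((continuous_finset_sum S fun j _ => continuous_const.mul (hatf_cont w j)).continuousOn),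
          cfc_id' ℝ h]
      rw [this]
      refine norm_cfc_le hw.le fun t ht => ?_
      rw [Real.norm_eq_abs]
      exact hat_approx hw hn (hspec t ht) (fun t => t) hw.le (fun j _ hc => hc)
    have hd2norm : ‖d2‖ ≤ 3*(r*w) := by
      rw [hd2def, hrepr2]
      have hmul : h * h = cfc (fun t : ℝ => t * t) h := by
        rw [cfc_mul (fun t : ℝ => t) (fun t : ℝ => t) h, cfc_id' ℝ h]
      rw [hmul]
      have : cfc (fun t : ℝ => t * t) h
            - cfc (fun t => ∑ j ∈ S, ((((j:ℝ)*w) * ((j:ℝ)*w)) * hatf w j t)) h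
          = cfc (fun t => t * t - ∑ j ∈ S, ((((j:ℝ)*w) * ((j:ℝ)*w)) * hatf w j t)) h := by
        rw [cfc_sub (fun t : ℝ => t * t)
          (fun t => ∑ j ∈ S, ((((j:ℝ)*w) * ((j:ℝ)*w)) * hatf w j t)) h
          (continuous_id.mul continuous_id).continuousOn
          ((continuous_finset_sum S fun j _ => continuous_const.mul (hatf_cont w j)).continuousOn)]
      rw [this]
      refine norm_cfc_le (by positivity) fun t ht => ?_
      rw [Real.norm_eq_abs]
      refine hat_approx hw hn (hspec t ht) (fun t => t * t) (by positivity) ?_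
      intro j hjS hclose
      have hjn : |(j:ℝ)| ≤ (n:ℝ) := by
        simp only [Finset.mem_Icc] at hjS
        have h1 : (-(n:ℤ) : ℝ) ≤ (j:ℝ) := by exact_mod_cast hjS.1
        have h2 : ((j:ℝ)) ≤ ((n:ℤ):ℝ) := by exact_mod_cast hjS.2
        rw [abs_le]
        constructor <;> push_cast at h1 h2 ⊢ <;> linarith
      have hjw : |(j:ℝ)*w| ≤ r := by
        rw [abs_mul, abs_of_pos hw, ← hnw]
        exact mul_le_mul_of_nonneg_right hjn hw.le
      have htr : |t| ≤ r := by rw [← hnw]; exact hspec t ht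
      have : t*t - ((j:ℝ)*w) * ((j:ℝ)*w) = (t - (j:ℝ)*w) * (t + (j:ℝ)*w) := by ring
      rw [this, abs_mul]
      have habs : |t + (j:ℝ)*w| ≤ 2*r := by
        calc |t + (j:ℝ)*w| ≤ |t| + |(j:ℝ)*w| := abs_add_le _ _
        _ ≤ 2*r := by linarith
      calc |t - (j:ℝ)*w| * |t + (j:ℝ)*w| ≤ w * (2*r) :=
            mul_le_mul hclose habs (abs_nonneg _) hw.le
      _ ≤ 3*(r*w) := by nlinarith
    -- the key quadratic bound
    set s : A := ∑ j ∈ S, ((j:ℝ)*w) • q j with hsdef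
    have hK1 : s * s ≤ ∑ j ∈ S, (((j:ℝ)*w) * ((j:ℝ)*w)) • q j :=
      kadison_finset S (fun j => (j:ℝ)*w) q hq0 hqsum
    have hsL : s = L h - L d1 := by
      rw [hd1def, map_sub, hsdef, hq]
      have : L (∑ j ∈ S, ((j:ℝ)*w) • hj j) = ∑ j ∈ S, ((j:ℝ)*w) • L (hj j) := by
        rw [map_sum]
        exact Finset.sum_congr rfl fun j _ => posmap_smul_real L _ _
      rw [this]
      abel
    have hsumq2 : ∑ j ∈ S, (((j:ℝ)*w) * ((j:ℝ)*w)) • q j = L (h*h) - L d2 := by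
      rw [hd2def, map_sub, hq]
      have : L (∑ j ∈ S, (((j:ℝ)*w) * ((j:ℝ)*w)) • hj j)
          = ∑ j ∈ S, (((j:ℝ)*w) * ((j:ℝ)*w)) • L (hj j) := by
        rw [map_sum]
        exact Finset.sum_congr rfl fun j _ => posmap_smul_real L _ _
      rw [this]
      abel
    -- norms of L-images
    have hLd1 : ‖L d1‖ ≤ 3*w := by
      calc ‖L d1‖ ≤ 3 * ‖d1‖ := posmap_norm_le L hL1 hLpos hd1sa
      _ ≤ 3*w := by linarith
    have hLd2 : ‖L d2‖ ≤ 9*(r*w) := by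
      calc ‖L d2‖ ≤ 3 * ‖d2‖ := posmap_norm_le L hL1 hLpos hd2sa
      _ ≤ 9*(r*w) := by linarith
    have hLh : ‖L h‖ ≤ 3*r := by
      calc ‖L h‖ ≤ 3 * ‖h‖ := posmap_norm_le L hL1 hLpos hh
      _ ≤ 3*r := by linarith
    have hsnorm : ‖s‖ ≤ 6*r := by
      rw [hsL]
      calc ‖L h - L d1‖ ≤ ‖L h‖ + ‖L d1‖ := norm_sub_le _ _
      _ ≤ 6*r := by nlinarith
    -- assemble
    have hLhsq : L h * L h = s * s + (s * L d1 + L d1 * s + L d1 * L d1) := by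
      have : L h = s + L d1 := by rw [hsL]; abel
      rw [this]
      noncomm_ring
    set Y : A := (s * L d1 + L d1 * s + L d1 * L d1) - L d2 with hYdef
    have hYsa : IsSelfAdjoint Y := by
      have hssa : IsSelfAdjoint s := by
        rw [hsL]
        exact (posmap_sa L hL1 hLpos hh).sub (posmap_sa L hL1 hLpos hd1sa)
      have he : IsSelfAdjoint (L d1) := posmap_sa L hL1 hLpos hd1sa
      rw [hYdef, IsSelfAdjoint]
      rw [star_sub, star_add, star_add, star_mul, star_mul, star_mul,
        hssa.star_eq, he.star_eq, (posmap_sa L hL1 hLpos hd2sa).star_eq]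
      abel
    have hYnorm : ‖Y‖ ≤ 54*(r*w) := by
      have h1 : ‖s * L d1‖ ≤ 18*(r*w) := by
        calc ‖s * L d1‖ ≤ ‖s‖ * ‖L d1‖ := norm_mul_le _ _
        _ ≤ (6*r)*(3*w) := by
            refine mul_le_mul hsnorm hLd1 (norm_nonneg _) (by positivity)
        _ = 18*(r*w) := by ring
      have h2 : ‖L d1 * s‖ ≤ 18*(r*w) := by
        calc ‖L d1 * s‖ ≤ ‖L d1‖ * ‖s‖ := norm_mul_le _ _
        _ ≤ (3*w)*(6*r) := by
            refine mul_le_mul hLd1 hsnorm (norm_nonneg _) (by positivity)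
        _ = 18*(r*w) := by ring
      have h3 : ‖L d1 * L d1‖ ≤ 9*(r*w) := by
        calc ‖L d1 * L d1‖ ≤ ‖L d1‖ * ‖L d1‖ := norm_mul_le _ _
        _ ≤ (3*w)*(3*w) := by
            refine mul_le_mul hLd1 hLd1 (norm_nonneg _) (by positivity)
        _ ≤ 9*(r*w) := by nlinarith
      calc ‖Y‖ ≤ ‖s * L d1 + L d1 * s + L d1 * L d1‖ + ‖L d2‖ := norm_sub_le _ _
      _ ≤ (‖s * L d1 + L d1 * s‖ + ‖L d1 * L d1‖) + ‖L d2‖ := by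
          gcongr
          exact norm_add_le _ _
      _ ≤ ((‖s * L d1‖ + ‖L d1 * s‖) + ‖L d1 * L d1‖) + ‖L d2‖ := by
          gcongr
          exact norm_add_le _ _
      _ ≤ 54*(r*w) := by linarith
    have hYle : Y ≤ (54*(r*w)) • 1 := by
      calc Y ≤ ‖Y‖ • 1 := by
            have := hYsa.le_algebraMap_norm_self
            rwa [Algebra.algebraMap_eq_smul_one] at this
      _ ≤ (54*(r*w)) • 1 := by
          rw [← sub_nonneg, ← sub_smul]
          exact smul_nonneg (by linarith) zero_le_one
    calc L h * L h = s * s + (s * L d1 + L d1 * s + L d1 * L d1) := hLhsq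
    _ ≤ (∑ j ∈ S, (((j:ℝ)*w) * ((j:ℝ)*w)) • q j) + (s * L d1 + L d1 * s + L d1 * L d1) := by
        exact add_le_add_left hK1 _
    _ = L (h*h) - L d2 + (s * L d1 + L d1 * s + L d1 * L d1) := by rw [hsumq2]
    _ = L (h*h) + Y := by rw [hYdef]; abel
    _ ≤ L (h*h) + (54*(r*w)) • 1 := add_le_add_right hYle _
    _ = L (h*h) + (54*(r*r)/(n:ℝ)) • 1 := by rw [hCrw]
  -- pass to the limit
  have hmain2 : ∀ n : ℕ, 1 ≤ n →
      (0:A) ≤ (L (h*h) - L h * L h) + ((54*(r*r))/(n:ℝ)) • 1 := by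
    intro n hn
    have := main n hn
    rw [← sub_nonneg] at this
    calc (0:A) ≤ L (h * h) + (54*(r*r)/(n:ℝ)) • 1 - L h * L h := this
    _ = (L (h*h) - L h * L h) + ((54*(r*r))/(n:ℝ)) • 1 := by abel
  have hfin := le_of_forall_nonneg_add (L (h*h) - L h * L h) (54*(r*r)) hmain2
  exact sub_nonneg.mp hfin

lemma aIm_star (x : A) : aIm (star x) = -aIm x := by
  unfold aIm
  rw [star_star, ← smul_neg, neg_sub]

lemma posmap_star_aux (L : A →ₗ[ℂ] A) (hL1 : L 1 = 1) (hLpos : ∀ x : A, 0 ≤ x → 0 ≤ L x)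
    (u v : A) (hu : IsSelfAdjoint u) (hv : IsSelfAdjoint v) :
    L (star (u + Complex.I • v)) = star (L (u + Complex.I • v)) := by
  have h1 : star (u + Complex.I • v) = u - Complex.I • v := by
    rw [star_add, hu.star_eq, star_smul, hv.star_eq, Complex.star_def, Complex.conj_I,
      neg_smul, ← sub_eq_add_neg]
  rw [h1, map_sub, map_smul, map_add, map_smul, star_add,
    (posmap_sa L hL1 hLpos hu).star_eq, star_smul, (posmap_sa L hL1 hLpos hv).star_eq,
    Complex.star_def, Complex.conj_I, neg_smul, ← sub_eq_add_neg]

lemma posmap_star (L : A →ₗ[ℂ] A) (hL1 : L 1 = 1) (hLpos : ∀ x : A, 0 ≤ x → 0 ≤ L x)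
    (x : A) : L (star x) = star (L x) := by
  have husa : IsSelfAdjoint ((2 : ℂ)⁻¹ • (x + star x)) := by
    refine IsSelfAdjoint.smul ?_ (IsSelfAdjoint.add_star_self x)
    show star ((2:ℂ)⁻¹) = (2:ℂ)⁻¹
    rw [RCLike.star_def, map_inv₀, map_ofNat]
  have hvsa : IsSelfAdjoint (aIm x) := by
    unfold aIm
    rw [IsSelfAdjoint, star_smul, star_sub, star_star, RCLike.star_def]
    have : (starRingEnd ℂ) (2 * Complex.I)⁻¹ = -(2 * Complex.I)⁻¹ := by
      simp [Complex.ext_iff]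
    rw [this, neg_smul, ← smul_neg, neg_sub]
  rw [self_eq_re_add_im x]
  exact posmap_star_aux L hL1 hLpos _ _ husa hvsa

lemma posmap_aIm (L : A →ₗ[ℂ] A) (hL1 : L 1 = 1) (hLpos : ∀ x : A, 0 ≤ x → 0 ≤ L x)
    (x : A) : aIm (L x) = L (aIm x) := by
  unfold aIm
  rw [map_smul, map_sub, posmap_star L hL1 hLpos]

lemma sqrt_unit_pack {x : A} (hx : StrictlyPos x) :
    ∃ u : Aˣ, (↑u : A) = CFC.sqrt x ∧ IsSelfAdjoint (↑u : A) ∧ IsSelfAdjoint (↑u⁻¹ : A) ∧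
      (↑u : A) * ↑u = x ∧ (0:A) ≤ ↑u ∧ (0:A) ≤ (↑u⁻¹ : A) := by
  have hprod : CFC.sqrt x * CFC.sqrt x = x := CFC.sqrt_mul_sqrt_self x hx.2.1
  have hsa : IsSelfAdjoint (CFC.sqrt x) := IsSelfAdjoint.of_nonneg (CFC.sqrt_nonneg _)
  have hU : IsUnit (CFC.sqrt x) :=
    ((Commute.refl _).isUnit_mul_iff.mp (by rw [hprod]; exact hx.2.2)).1
  refine ⟨hU.unit, rfl, hsa, ?_, hprod, CFC.sqrt_nonneg _, ?_⟩
  · have hκj : (↑hU.unit : A) * ↑hU.unit⁻¹ = 1 := hU.unit.mul_inv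
    have hjκ : (↑hU.unit⁻¹ : A) * ↑hU.unit = 1 := hU.unit.inv_mul
    have h1 : star (↑hU.unit⁻¹ : A) * CFC.sqrt x = 1 := by
      have := congrArg star hκj
      rwa [star_mul, star_one, show star (↑hU.unit : A) = CFC.sqrt x from hsa.star_eq] at this
    calc star (↑hU.unit⁻¹ : A)
        = star (↑hU.unit⁻¹ : A) * ((↑hU.unit : A) * ↑hU.unit⁻¹) := by rw [hκj, mul_one]
    _ = (star (↑hU.unit⁻¹ : A) * ↑hU.unit) * ↑hU.unit⁻¹ := by rw [mul_assoc]
    _ = (↑hU.unit⁻¹ : A) := by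
        rw [show (↑hU.unit : A) = CFC.sqrt x from rfl] at *
        rw [h1, one_mul]
  · exact CFC.inv_nonneg_of_nonneg hU.unit (CFC.sqrt_nonneg _)
end AllHelpers

/-- For a unital positive map `E` from a C*-algebra `A` onto a C*-subalgebra `B` and
`a ∈ A` with `Im a > 0`: `a` is invertible, `-Im E[a⁻¹] > 0` (so `E[a⁻¹]` is invertible),
`(Im a)⁻¹` exists with `E[(Im a)⁻¹] > 0`, and `Im (E[a⁻¹]⁻¹) ≥ E[(Im a)⁻¹]⁻¹`. -/
theorem stmt_2 {A : Type*} [CStarAlgebra A] [PartialOrder A] [StarOrderedRing A]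
    (B : StarSubalgebra ℂ A) (hBclosed : IsClosed (B : Set A))
    (E : A →ₗ[ℂ] A) (hErange : ∀ a : A, E a ∈ B)
    (hE1 : E 1 = 1) (hEpos : ∀ a : A, 0 ≤ a → 0 ≤ E a)
    (a : A) (ha : StrictlyPos (aIm a)) :
    IsUnit a ∧
    StrictlyPos (-(aIm (E (Ring.inverse a)))) ∧
    IsUnit (E (Ring.inverse a)) ∧
    IsUnit (aIm a) ∧
    StrictlyPos (E (Ring.inverse (aIm a))) ∧
    Ring.inverse (E (Ring.inverse (aIm a))) ≤ aIm (Ring.inverse (E (Ring.inverse a))) := by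
  rcases subsingleton_or_nontrivial A with hTriv | hNT
  · have he : ∀ x y : A, x = y := fun x y => Subsingleton.elim x y
    have hsp : ∀ x : A, StrictlyPos x := fun x =>
      ⟨he _ _, le_of_eq (he _ _), ⟨⟨x, x, he _ _, he _ _⟩, rfl⟩⟩
    exact ⟨(hsp a).2.2, hsp _, (hsp _).2.2, (hsp _).2.2, hsp _, le_of_eq (he _ _)⟩
  set k := aIm a with hkdef
  have hksa : IsSelfAdjoint k := ha.1
  have haU : IsUnit a := isUnit_of_strictlyPos_aIm ha
  set au := haU.unit with haudef
  have hauval : (↑au : A) = a := rfl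
  have hainv : Ring.inverse a = (↑au⁻¹ : A) := by
    rw [← hauval, Ring.inverse_unit]
  have himinv : aIm (↑au⁻¹ : A) = -((↑au⁻¹ : A) * k * star (↑au⁻¹ : A)) := by
    rw [aIm_units_inv au]
    rw [show aIm (↑au : A) = k from rfl]
  set P : A := (↑au⁻¹ : A) * k * star (↑au⁻¹ : A) with hPdef
  have hkU : IsUnit k := ha.2.2
  set ku := hkU.unit with hkudef
  have hkuval : (↑ku : A) = k := rfl
  obtain ⟨κu, hκval, hκsa, hκisa, hκprod, hκ0, hκi0⟩ := sqrt_unit_pack ha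
  have hPsa_aux : P = ((↑au⁻¹ : A) * ↑κu) * star ((↑au⁻¹ : A) * ↑κu) := by
    rw [star_mul, hκsa.star_eq, hPdef, ← hκprod]
    simp only [mul_assoc]
  have hPnn : (0:A) ≤ P := hPsa_aux ▸ mul_star_self_nonneg _
  have hPsa : IsSelfAdjoint P := IsSelfAdjoint.of_nonneg hPnn
  have hPU : IsUnit P := by
    rw [hPsa_aux]
    exact (au⁻¹.isUnit.mul κu.isUnit).mul (isUnit_star.mpr (au⁻¹.isUnit.mul κu.isUnit))
  have hPpos : StrictlyPos P := ⟨hPsa, hPnn, hPU⟩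
  obtain ⟨εP, hεP, hPle⟩ := hPpos.exists_algebraMap_le
  have hEsmul : ∀ (c : ℝ), E (algebraMap ℝ A c) = algebraMap ℝ A c := by
    intro c
    rw [Algebra.algebraMap_eq_smul_one, posmap_smul_real, hE1]
  set m : A := E P with hmdef
  have hmsa : IsSelfAdjoint m := posmap_sa E hE1 hEpos hPsa
  have hmle : algebraMap ℝ A εP ≤ m := by
    have := posmap_mono E hEpos hPle
    rwa [hEsmul] at this
  have hmpos : StrictlyPos m := strictlyPos_of_algebraMap_le hmsa hεP hmle
  set b : A := E (↑au⁻¹ : A) with hbdef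
  have hbim : aIm b = -m := by
    rw [hbdef, posmap_aIm E hE1 hEpos, himinv, map_neg, hmdef]
  have hbU : IsUnit b := by
    have h1 : aIm (star b) = m := by rw [aIm_star, hbim, neg_neg]
    have h2 : IsUnit (star b) :=
      isUnit_of_strictlyPos_aIm (show StrictlyPos (aIm (star b)) by rw [h1]; exact hmpos)
    exact isUnit_star.mp h2
  have hkinn : (0:A) ≤ (↑ku⁻¹ : A) := CFC.inv_nonneg_of_nonneg ku (hkuval ▸ ha.2.1)
  have hkipos : StrictlyPos (↑ku⁻¹ : A) :=
    ⟨IsSelfAdjoint.of_nonneg hkinn, hkinn, ku⁻¹.isUnit⟩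
  obtain ⟨εK, hεK, hKle⟩ := hkipos.exists_algebraMap_le
  set nn : A := E (↑ku⁻¹ : A) with hnndef
  have hnnle : algebraMap ℝ A εK ≤ nn := by
    have := posmap_mono E hEpos hKle
    rwa [hEsmul] at this
  have hnnpos : StrictlyPos nn :=
    strictlyPos_of_algebraMap_le (posmap_sa E hE1 hEpos (IsSelfAdjoint.of_nonneg hkinn)) hεK hnnle
  have hkinv : Ring.inverse k = (↑ku⁻¹ : A) := by rw [← hkuval, Ring.inverse_unit]
  obtain ⟨pu, hpval, hpsa, hpisa, hpprod, hp0, hpi0⟩ := sqrt_unit_pack hPpos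
  obtain ⟨μu, hμval, hμsa, hμisa, hμprod, hμ0, hμi0⟩ := sqrt_unit_pack hmpos
  set p : A := (↑pu : A) with hpdef
  set q : A := (↑μu⁻¹ : A) with hqdef
  set L : A →ₗ[ℂ] A := {
    toFun := fun x => q * E (p * x * p) * q,
    map_add' := by intro x y; simp only [mul_add, add_mul, map_add],
    map_smul' := by intro c x; simp only [mul_smul_comm, smul_mul_assoc, map_smul,
      RingHom.id_apply] } with hLdef
  have hLapp : ∀ x : A, L x = q * E (p * x * p) * q := fun _ => rfl
  have hL1 : L 1 = 1 := by
    rw [hLapp, mul_one, hpprod, ← hmdef, ← hμprod]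
    calc (↑μu⁻¹ : A) * ((↑μu : A) * ↑μu) * ↑μu⁻¹
        = ((↑μu⁻¹ : A) * ↑μu) * ((↑μu : A) * ↑μu⁻¹) := by simp only [mul_assoc]
    _ = 1 := by rw [μu.inv_mul, μu.mul_inv, one_mul]
  have hLpos : ∀ x : A, 0 ≤ x → 0 ≤ L x := by
    intro x hx
    rw [hLapp]
    exact hμisa.conjugate_nonneg (hEpos _ (hpsa.conjugate_nonneg hx))
  set y : A := (↑pu⁻¹ : A) * (↑au⁻¹ : A) * (↑pu⁻¹ : A) with hydef
  have hpinvP : (↑pu⁻¹ : A) * P * (↑pu⁻¹ : A) = 1 := by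
    rw [← hpprod]
    calc (↑pu⁻¹ : A) * ((↑pu : A) * ↑pu) * ↑pu⁻¹
        = ((↑pu⁻¹ : A) * ↑pu) * ((↑pu : A) * ↑pu⁻¹) := by simp only [mul_assoc]
    _ = 1 := by rw [pu.inv_mul, pu.mul_inv, one_mul]
  have hyim : aIm y = -1 := by
    rw [hydef, aIm_conj _ _ hpisa, himinv, mul_neg, neg_mul, hpinvP]
  set hh : A := y + Complex.I • 1 with hhdef
  have hstar_y : star y = y + (2*Complex.I) • 1 := by
    have h2 := congrArg (fun z : A => (2*Complex.I) • z) hyim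
    beta_reduce at h2
    unfold aIm at h2
    rw [smul_smul] at h2
    have hne : (2*Complex.I) ≠ 0 := by simp [Complex.I_ne_zero]
    rw [mul_inv_cancel₀ hne, one_smul] at h2
    have h3 : star y = y - (2*Complex.I) • (-1 : A) := by
      rw [← h2]; abel
    rw [h3, smul_neg]; abel
  have hhsa : IsSelfAdjoint hh := by
    rw [hhdef, IsSelfAdjoint, star_add, hstar_y, star_smul, star_one, Complex.star_def,
      Complex.conj_I, neg_smul, two_mul, add_smul]
    abel
  have hkad := kadison L hL1 hLpos hhsa
  have sandwichP : ∀ X : A, p * ((↑pu⁻¹ : A) * X * (↑pu⁻¹ : A)) * p = X := by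
    intro X
    calc p * ((↑pu⁻¹ : A) * X * (↑pu⁻¹ : A)) * p
        = ((↑pu : A) * ↑pu⁻¹) * X * ((↑pu⁻¹ : A) * ↑pu) := by
          rw [hpdef]; simp only [mul_assoc]
    _ = X := by rw [pu.mul_inv, pu.inv_mul, one_mul, mul_one]
  have hLy : L y = q * b * q := by rw [hLapp, hydef, sandwichP]
  have hPuinv : (↑(pu*pu)⁻¹ : A) = (↑pu⁻¹ : A) * (↑pu⁻¹ : A) := by
    rw [mul_inv_rev, Units.val_mul]
  have hPuval : (↑(pu*pu) : A) = P := by rw [Units.val_mul, hpprod]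
  have hconj1 : (↑au⁻¹ : A) * k = P * star (↑au : A) := by
    have h1 : star (↑au⁻¹ : A) * star (↑au : A) = 1 := by
      rw [← star_mul, au.mul_inv, star_one]
    rw [hPdef]
    calc (↑au⁻¹ : A) * k = (↑au⁻¹ : A) * k * (star (↑au⁻¹ : A) * star (↑au : A)) := by
          rw [h1, mul_one]
    _ = (↑au⁻¹ : A) * k * star (↑au⁻¹ : A) * star (↑au : A) := by simp only [mul_assoc]
  have hkinv_id : star (↑au⁻¹ : A) * (↑(pu*pu)⁻¹ : A) * (↑au⁻¹ : A) = (↑ku⁻¹ : A) := by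
    have hWk : star (↑au⁻¹ : A) * (↑(pu*pu)⁻¹ : A) * (↑au⁻¹ : A) * k = 1 := by
      calc star (↑au⁻¹:A) * ↑(pu*pu)⁻¹ * ↑au⁻¹ * k
          = star (↑au⁻¹:A) * (↑(pu*pu)⁻¹ * ((↑au⁻¹ : A) * k)) := by simp only [mul_assoc]
      _ = star (↑au⁻¹:A) * (↑(pu*pu)⁻¹ * (P * star (↑au:A))) := by rw [hconj1]
      _ = star (↑au⁻¹:A) * (((↑(pu*pu)⁻¹ : A) * ↑(pu*pu)) * star (↑au:A)) := by
            rw [hPuval]; simp only [mul_assoc]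
      _ = star (↑au⁻¹:A) * star (↑au:A) := by rw [(pu*pu).inv_mul, one_mul]
      _ = 1 := by rw [← star_mul, au.mul_inv, star_one]
    have hks : k * star (↑au⁻¹ : A) = (↑au : A) * P := by
      have h5 := congrArg star hconj1
      rwa [star_mul, star_mul, hksa.star_eq, star_star, hPsa.star_eq] at h5
    have hkW : k * (star (↑au⁻¹ : A) * (↑(pu*pu)⁻¹ : A) * (↑au⁻¹ : A)) = 1 := by
      calc k * (star (↑au⁻¹:A) * ↑(pu*pu)⁻¹ * ↑au⁻¹)
          = (k * star (↑au⁻¹:A)) * ↑(pu*pu)⁻¹ * ↑au⁻¹ := by simp only [mul_assoc]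
      _ = (↑au : A) * P * ↑(pu*pu)⁻¹ * ↑au⁻¹ := by rw [hks]
      _ = (↑au : A) * (((↑(pu*pu) : A) * ↑(pu*pu)⁻¹) * ↑au⁻¹) := by
            rw [hPuval]; simp only [mul_assoc]
      _ = 1 := by rw [(pu*pu).mul_inv, one_mul, au.mul_inv]
    calc star (↑au⁻¹ : A) * (↑(pu*pu)⁻¹ : A) * (↑au⁻¹ : A)
        = (↑ku⁻¹ : A) * (k * (star (↑au⁻¹ : A) * (↑(pu*pu)⁻¹ : A) * (↑au⁻¹ : A))) := by
          rw [← mul_assoc, show (↑ku⁻¹:A) * k = 1 from ku.inv_mul, one_mul]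
    _ = (↑ku⁻¹ : A) := by rw [hkW, mul_one]
  have hsy : star y = (↑pu⁻¹ : A) * star (↑au⁻¹ : A) * (↑pu⁻¹ : A) := by
    rw [hydef, star_mul, star_mul, hpisa.star_eq]
    simp only [mul_assoc]
  have hsyy : star y * y = (↑pu⁻¹ : A) * (↑ku⁻¹ : A) * (↑pu⁻¹ : A) := by
    rw [hsy, hydef, ← hkinv_id, hPuinv]
    calc (↑pu⁻¹:A) * star (↑au⁻¹:A) * (↑pu⁻¹:A) * ((↑pu⁻¹:A) * (↑au⁻¹:A) * (↑pu⁻¹:A))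
        = (↑pu⁻¹:A) * (star (↑au⁻¹:A) * ((↑pu⁻¹:A) * (↑pu⁻¹:A)) * (↑au⁻¹:A)) * (↑pu⁻¹:A) := by
          simp only [mul_assoc]
    _ = _ := by simp only [mul_assoc]
  have hLss : L (star y * y) = q * nn * q := by
    rw [hLapp, hsyy, sandwichP]
  have hLyval : L y = L hh - Complex.I • 1 := by
    have : L hh = L y + Complex.I • 1 := by
      rw [hhdef, map_add, map_smul, hL1]
    rw [this]; abel
  have hstarLy : star (L y) = L hh + Complex.I • 1 := by
    rw [hLyval, star_sub, (posmap_sa L hL1 hLpos hhsa).star_eq, star_smul, star_one,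
      Complex.star_def, Complex.conj_I, neg_smul, sub_neg_eq_add]
  have hyform : y = hh - Complex.I • 1 := by rw [hhdef]; abel
  have hsyform : star y = hh + Complex.I • 1 := by
    rw [hstar_y, hyform, two_mul, add_smul]; abel
  have hyy2 : star y * y = hh * hh + 1 := by
    rw [hsyform, hyform]; exact (mul_conj_sa hh hhsa).1
  have hq_ineq : star (L y) * L y ≤ q * nn * q := by
    have h1 : star (L y) * L y = L hh * L hh + 1 := by
      rw [hstarLy, hLyval]
      exact (mul_conj_sa _ (posmap_sa L hL1 hLpos hhsa)).1
    have h2 : L (hh * hh) = q * nn * q - 1 := by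
      have h3 : hh * hh = star y * y - 1 := by rw [hyy2]; abel
      rw [h3, map_sub, hL1, hLss]
    rw [h1]
    calc L hh * L hh + 1 ≤ L (hh*hh) + 1 := add_le_add_left hkad 1
    _ = q * nn * q := by rw [h2]; abel
  set Mu := μu * μu with hMudef
  have hMuval : (↑Mu : A) = m := by rw [hMudef, Units.val_mul, hμprod]
  have hMuinv : (↑Mu⁻¹ : A) = q * q := by rw [hMudef, mul_inv_rev, Units.val_mul]
  have hqsa : IsSelfAdjoint q := hμisa
  have hLyexp : star (L y) * L y = q * (star b * (↑Mu⁻¹ : A) * b) * q := by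
    rw [hLy, star_mul, star_mul, hqsa.star_eq, hMuinv]
    simp only [mul_assoc]
  have hKEY : star b * (↑Mu⁻¹ : A) * b ≤ nn := by
    have h3 : q * (star b * (↑Mu⁻¹:A) * b) * q ≤ q * nn * q := by
      rw [← hLyexp]; exact hq_ineq
    have h4 := hμsa.conjugate_le_conjugate h3
    have sandwichM : ∀ X : A, (↑μu:A) * ((↑μu⁻¹:A) * X * (↑μu⁻¹:A)) * (↑μu:A) = X := by
      intro X
      calc (↑μu:A) * ((↑μu⁻¹:A) * X * (↑μu⁻¹:A)) * (↑μu:A)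
          = ((↑μu:A) * ↑μu⁻¹) * X * ((↑μu⁻¹:A) * ↑μu) := by simp only [mul_assoc]
      _ = X := by rw [μu.mul_inv, μu.inv_mul, one_mul, mul_one]
    rwa [sandwichM, sandwichM] at h4
  set bu := hbU.unit with hbudef
  have hbuval : (↑bu : A) = b := rfl
  have haImbu : aIm (↑bu⁻¹ : A) = (↑bu⁻¹:A) * m * star (↑bu⁻¹:A) := by
    rw [aIm_units_inv bu, show aIm (↑bu : A) = -m from hbim, mul_neg, neg_mul, neg_neg]
  set V : A := star b * (↑Mu⁻¹ : A) * b with hVdef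
  set W' : A := (↑bu⁻¹:A) * m * star (↑bu⁻¹:A) with hWdef
  have hVW : V * W' = 1 := by
    rw [hVdef, hWdef]
    calc star b * (↑Mu⁻¹:A) * b * ((↑bu⁻¹:A) * m * star (↑bu⁻¹:A))
        = star b * ((↑Mu⁻¹:A) * ((b * (↑bu⁻¹:A)) * (m * star (↑bu⁻¹:A)))) := by
          simp only [mul_assoc]
    _ = star b * ((↑Mu⁻¹:A) * (m * star (↑bu⁻¹:A))) := by
          rw [show b * (↑bu⁻¹:A) = 1 from bu.mul_inv, one_mul]
    _ = star b * ((((↑Mu⁻¹:A)) * ↑Mu) * star (↑bu⁻¹:A)) := by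
          rw [hMuval]; simp only [mul_assoc]
    _ = star b * star (↑bu⁻¹:A) := by rw [Mu.inv_mul, one_mul]
    _ = 1 := by rw [← star_mul, show (↑bu⁻¹:A) * b = 1 from bu.inv_mul, star_one]
  have hW'V : W' * V = 1 := by
    rw [hVdef, hWdef]
    calc (↑bu⁻¹:A) * m * star (↑bu⁻¹:A) * (star b * (↑Mu⁻¹:A) * b)
        = (↑bu⁻¹:A) * (m * ((star (↑bu⁻¹:A) * star b) * ((↑Mu⁻¹:A) * b))) := by
          simp only [mul_assoc]
    _ = (↑bu⁻¹:A) * (m * ((↑Mu⁻¹:A) * b)) := by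
          rw [← star_mul, show b * (↑bu⁻¹:A) = 1 from bu.mul_inv, star_one, one_mul]
    _ = (↑bu⁻¹:A) * ((((↑Mu:A)) * ↑Mu⁻¹) * b) := by
          rw [hMuval]; simp only [mul_assoc]
    _ = 1 := by rw [Mu.mul_inv, one_mul, show (↑bu⁻¹:A) * b = 1 from bu.inv_mul]
  set Vu : Aˣ := ⟨V, W', hVW, hW'V⟩ with hVudef
  set nu := hnnpos.2.2.unit with hnudef
  have hnuval : (↑nu : A) = nn := rfl
  have hV0 : (0:A) ≤ V := by
    rw [hVdef]
    exact star_left_conjugate_nonneg (CFC.inv_nonneg_of_nonneg Mu (hMuval ▸ hmpos.2.1)) b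
  have hVle : (↑Vu : A) ≤ ↑nu := hKEY
  have hfinal : (↑nu⁻¹ : A) ≤ (↑Vu⁻¹ : A) := CStarAlgebra.inv_le_inv hV0 hVle
  refine ⟨haU, ?_, ?_, ha.2.2, ?_, ?_⟩
  · rw [hainv, ← hbdef, hbim, neg_neg]; exact hmpos
  · rw [hainv, ← hbdef]; exact hbU
  · rw [hkinv, ← hnndef]; exact hnnpos
  · rw [hkinv, ← hnndef, hainv, ← hbdef]
    rw [show Ring.inverse nn = (↑nu⁻¹ : A) from by rw [← hnuval, Ring.inverse_unit],
       show Ring.inverse b = (↑bu⁻¹ : A) from by rw [← hbuval, Ring.inverse_unit],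
       haImbu]
    exact hfinal
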